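/- Fix β > 0 and define g(ρ) = (√((β+ρ−1)² + 4ρ) − (β+ρ−1)) / (2ρ) for ρ > 0. Then g is differentiable at every ρ > 0 with derivative g'(ρ) = − g(ρ)(1+g(ρ))² / (β + ρ(1+g(ρ))²); in particular g'(ρ) < 0 for every ρ > 0, so g is strictly decreasing on (0,∞). -/

import Mathlib

/-- For fixed `β > 0`, the function `g(ρ) = (√((β+ρ−1)² + 4ρ) − (β+ρ−1))/(2ρ)` is
differentiable at every `ρ > 0` with derivative `−g(ρ)(1+g(ρ))²/(β + ρ(1+g(ρ))²)`,
which is negative, so `g` is strictly decreasing on `(0,∞)`. -/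
theorem stmt2 (β : ℝ) (hβ : 0 < β)
    (g : ℝ → ℝ)
    (hg : ∀ ρ, g ρ = (Real.sqrt ((β + ρ - 1) ^ 2 + 4 * ρ) - (β + ρ - 1)) / (2 * ρ)) :
    (∀ ρ : ℝ, 0 < ρ →
      HasDerivAt g (-(g ρ * (1 + g ρ) ^ 2 / (β + ρ * (1 + g ρ) ^ 2))) ρ) ∧
    (∀ ρ : ℝ, 0 < ρ → deriv g ρ < 0) ∧
    StrictAntiOn g (Set.Ioi 0) := by
  have key : ∀ ρ : ℝ, 0 < ρ →
      HasDerivAt g (-(g ρ * (1 + g ρ) ^ 2 / (β + ρ * (1 + g ρ) ^ 2))) ρ ∧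
      -(g ρ * (1 + g ρ) ^ 2 / (β + ρ * (1 + g ρ) ^ 2)) < 0 := by
    intro ρ hρ
    have hρ' : ρ ≠ 0 := ne_of_gt hρ
    set s := Real.sqrt ((β + ρ - 1) ^ 2 + 4 * ρ) with hsdef
    have hD : 0 < (β + ρ - 1) ^ 2 + 4 * ρ := by positivity
    have hspos : 0 < s := Real.sqrt_pos.mpr hD
    have hs2 : s ^ 2 = (β + ρ - 1) ^ 2 + 4 * ρ := Real.sq_sqrt hD.le
    have hsgt : β + ρ - 1 < s := by nlinarith
    set G := g ρ with hGdef
    have hGval : G = (s - (β + ρ - 1)) / (2 * ρ) := hg ρ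
    have hGpos : 0 < G := by
      rw [hGval]
      exact div_pos (sub_pos.mpr hsgt) (by positivity)
    have hsg : s = 2 * ρ * G + (β + ρ - 1) := by
      rw [hGval]; field_simp; ring
    have hq : ρ * G ^ 2 + (β + ρ - 1) * G - 1 = 0 := by
      have h4 : 4 * ρ * (ρ * G ^ 2 + (β + ρ - 1) * G - 1) = 0 := by
        have := hs2
        rw [hsg] at this
        linear_combination this
      have := mul_eq_zero.mp h4
      rcases this with h | h
      · exact absurd h (by positivity)
      · exact h
    have hden : 0 < β + ρ * (1 + G) ^ 2 := by positivity
    -- derivative of the explicit formula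
    have h1 : HasDerivAt (fun x : ℝ => (β + x - 1) ^ 2 + 4 * x)
        (2 * (β + ρ - 1) + 4) ρ := by
      have ha : HasDerivAt (fun x : ℝ => β + x - 1) 1 ρ := by
        simpa using ((hasDerivAt_id ρ).const_add β).sub_const 1
      have := (ha.pow 2).add ((hasDerivAt_id ρ).const_mul 4)
      exact this.congr_deriv (by norm_num)
    have h2 : HasDerivAt (fun x : ℝ => Real.sqrt ((β + x - 1) ^ 2 + 4 * x))
        ((2 * (β + ρ - 1) + 4) / (2 * s)) ρ := h1.sqrt (ne_of_gt hD)
    have h3 : HasDerivAt (fun x : ℝ => Real.sqrt ((β + x - 1) ^ 2 + 4 * x) - (β + x - 1))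
        ((2 * (β + ρ - 1) + 4) / (2 * s) - 1) ρ := by
      have ha : HasDerivAt (fun x : ℝ => β + x - 1) 1 ρ := by
        simpa using ((hasDerivAt_id ρ).const_add β).sub_const 1
      exact h2.sub ha
    have h4 : HasDerivAt (fun x : ℝ => 2 * x) 2 ρ := by
      simpa using (hasDerivAt_id ρ).const_mul 2
    have h5 : HasDerivAt (fun x : ℝ =>
        (Real.sqrt ((β + x - 1) ^ 2 + 4 * x) - (β + x - 1)) / (2 * x))
        ((((2 * (β + ρ - 1) + 4) / (2 * s) - 1) * (2 * ρ) - (s - (β + ρ - 1)) * 2) / (2 * ρ) ^ 2)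
        ρ := h3.div h4 (by positivity)
    have hfun : (fun x : ℝ =>
        (Real.sqrt ((β + x - 1) ^ 2 + 4 * x) - (β + x - 1)) / (2 * x)) = g := by
      funext x; rw [hg x]
    rw [hfun] at h5
    have heq : (((2 * (β + ρ - 1) + 4) / (2 * s) - 1) * (2 * ρ) - (s - (β + ρ - 1)) * 2) / (2 * ρ) ^ 2
        = -(G * (1 + G) ^ 2 / (β + ρ * (1 + G) ^ 2)) := by
      have hTne : 2 * ρ * G + (β + ρ - 1) ≠ 0 := by rw [← hsg]; exact ne_of_gt hspos
      rw [hsg]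
      field_simp
      linear_combination (-4*ρ*(ρ*G + β + ρ)) * hq
    rw [heq] at h5
    refine ⟨h5, ?_⟩
    have : 0 < G * (1 + G) ^ 2 / (β + ρ * (1 + G) ^ 2) := by positivity
    linarith
  refine ⟨fun ρ hρ => (key ρ hρ).1, fun ρ hρ => ?_, ?_⟩
  · rw [(key ρ hρ).1.deriv]; exact (key ρ hρ).2
  · apply strictAntiOn_of_deriv_neg (convex_Ioi 0)
    · exact fun x hx => ((key x hx).1.continuousAt.continuousWithinAt)
    · intro x hx
      rw [interior_Ioi] at hx
      rw [(key x hx).1.deriv]; exact (key x hx).2
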